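/- arXiv:1508.02517 — 3 statements merged into one kernel-verified Lean document; each statement's English description precedes it below -/
import Mathlib

section
/- For every d ≥ 1, let G^0(d) be the path in ℤ^d that starts at the origin and whose successive edge directions are given by G(d) (an edge with direction i increments coordinate |i| by sgn(i) and leaves the other coordinates unchanged). Then the set of vertices of G^0(d) is exactly {0,1}^d, and the last vertex of G^0(d) is the point (0,…,0,1) whose d-th coordinate is 1 and whose other coordinates are 0. -/
open MeasureTheory

/-! ## Basic objects: points of `ℤ^d` (indexed by coordinates `1,…,d`), directions,
Gray codes, curves on the grid, inflation, well-foldedness, hyperorthogonality. -/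

/-- A point of the grid `ℤ^d`; only coordinates `1,…,d` are meaningful
(coordinate `0` and coordinates `> d` are kept equal to `0`). -/
abbrev Pt : Type := ℕ → ℤ

def ptZero : Pt := fun _ => 0

/-- `flipped i = 1` if `i < 0`, and `0` otherwise. -/
def flipped (i : ℤ) : ℤ := if i < 0 then 1 else 0

/-- Reversal of a free curve (sequence of directions): reverse the order and
negate every direction. -/
def grayRev (l : List ℤ) : List ℤ := (l.map (fun x => -x)).reverse

/-- The Gray-code free curve `G(d)`: `G(0)` is empty and `G(d)` is the
concatenation of `G(d-1)`, the single direction `d`, and the reverse of `G(d-1)`. -/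
def G : ℕ → List ℤ
  | 0 => []
  | d + 1 => G d ++ [((d : ℤ) + 1)] ++ grayRev (G d)

/-- Moving a point one step in direction `e`: coordinate `|e|` changes by `sgn e`. -/
def move (v : Pt) (e : ℤ) : Pt := fun j => if j = e.natAbs then v j + e.sign else v j

/-- The vertices of the path starting at `start` whose successive edge
directions are given by `dirs`. -/
def pathVertices (start : Pt) (dirs : List ℤ) : List Pt := dirs.scanl move start

/-- `e` is a valid direction in `d` dimensions: `e ∈ {−d,…,−1,1,…,d}`. -/
def IsDir (d : ℕ) (e : ℤ) : Prop := e ≠ 0 ∧ e.natAbs ≤ d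

/-- The (ordered) pair `(v,w)` is an edge with direction `e`. -/
def HasDir (d : ℕ) (v w : Pt) (e : ℤ) : Prop := IsDir d e ∧ w = move v e

/-- `(v,w)` is an edge of the grid. -/
def IsEdge (d : ℕ) (v w : Pt) : Prop := ∃ e, HasDir d v w e

/-- A curve on the grid: a finite sequence of distinct points in which each pair of
consecutive points differs by `±1` in exactly one coordinate. -/
def IsGridCurve (d : ℕ) (c : List Pt) : Prop := c.Nodup ∧ c.Chain' (IsEdge d)

/-- Membership in the cube `{0,…,2^k−1}^d` (unused coordinates are `0`). -/
def InCube (d k : ℕ) (v : Pt) : Prop :=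
  (∀ j, 1 ≤ j → j ≤ d → 0 ≤ v j ∧ v j < 2 ^ k) ∧ (∀ j, j = 0 ∨ d < j → v j = 0)

/-- A `k`-curve: a Hamiltonian path on the grid `{0,…,2^k−1}^d`. -/
def IsKCurve (d k : ℕ) (c : List Pt) : Prop :=
  IsGridCurve d c ∧ ∀ v : Pt, v ∈ c ↔ InCube d k v

/-- A signed permutation of `{−d,…,−1,1,…,d}`: a bijection `σ` of this set
with `σ(−k) = −σ(k)` (bundled with its inverse). -/
structure SignedPerm (d : ℕ) where
  f : ℤ → ℤ
  inv : ℤ → ℤ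
  maps : ∀ i : ℤ, IsDir d i → IsDir d (f i)
  maps_inv : ∀ i : ℤ, IsDir d i → IsDir d (inv i)
  neg : ∀ i : ℤ, f (-i) = -f i
  neg_inv : ∀ i : ℤ, inv (-i) = -inv i
  left_inv : ∀ i : ℤ, IsDir d i → inv (f i) = i
  right_inv : ∀ i : ℤ, IsDir d i → f (inv i) = i

/-- The 1-curve `σ(G(d))` (an isometric image of the Gray-code curve) placed in the
cube `2·v + {0,1}^d`; its entry corner is forced to be
`2·v + (flipped(σ⁻¹(1)),…,flipped(σ⁻¹(d)))`. -/
def grayPiece (d : ℕ) (σ : SignedPerm d) (v : Pt) : List Pt :=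
  pathVertices (fun j => 2 * v j + if 1 ≤ j ∧ j ≤ d then flipped (σ.inv (j : ℤ)) else 0)
    ((G d).map σ.f)

/-- `B` is obtained from `A` by (well-folded) inflation: each vertex of `A` is
replaced by an isometric image of `G(d)` in the corresponding subcube, and the
result is a valid curve on the grid. (Reversed images of `G(d)` are themselves
images of `G(d)` under another signed permutation, so no generality is lost.) -/
def IsInflationWF (d : ℕ) (A B : List Pt) : Prop :=
  ∃ σ : ℕ → SignedPerm d,
    B = ((List.range A.length).map (fun i => grayPiece d (σ i) (A.getD i ptZero))).flatten ∧
    IsGridCurve d B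

/-- A curve is well-folded if it is a single vertex or is obtained by inflation from a
well-folded curve, every inserted 1-curve being an isometric image of `G(d)`. -/
inductive WellFolded (d : ℕ) : List Pt → Prop
  | single (v : Pt) : WellFolded d [v]
  | inflate {A B : List Pt} : WellFolded d A → IsInflationWF d A B → WellFolded d B

/-- The set of axes in which `v` and `w` differ (for a grid edge this is the
singleton of its axis). -/
def axesOfEdge (d : ℕ) (v w : Pt) : Finset ℕ :=
  (Finset.range (d + 1)).filter (fun j => v j ≠ w j)

/-- Hyperorthogonality: for every `n ∈ {0,…,d−2}`, every `2^n` consecutive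
edges of the curve have exactly `n+1` distinct axes. -/
def Hyperorthogonal (d : ℕ) (c : List Pt) : Prop :=
  ∀ n, n ≤ d - 2 → ∀ s, s + 2 ^ n + 1 ≤ c.length →
    ((Finset.range (2 ^ n)).biUnion
      (fun t => axesOfEdge d (c.getD (s + t) ptZero) (c.getD (s + t + 1) ptZero))).card = n + 1

/-- The depth of a direction `a` in a signed permutation `σ`:
`0` if `|a| ∈ {|σ(d)|,|σ(d−1)|}`, and otherwise the number `j` with `|σ(d−1−j)| = |a|`. -/
def depth (d : ℕ) (σ : SignedPerm d) (a : ℤ) : ℕ :=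
  if (σ.inv a).natAbs = d ∨ (σ.inv a).natAbs = d - 1 then 0 else d - 1 - (σ.inv a).natAbs

/-- The (signed) direction of the edge from `v` to `w`
(for a grid edge with axis `j` this is `±j`). -/
def dirOf (d : ℕ) (v w : Pt) : ℤ :=
  ∑ j ∈ (Finset.range (d + 1)).filter (fun j => v j ≠ w j), (j : ℤ) * (w j - v j)

/-- The axis of the edge from `v` to `w`. -/
def axisOf (d : ℕ) (v w : Pt) : ℕ := (dirOf d v w).natAbs

/-! ## Extended curves -/

/-- For the extended curve with entry-edge direction `en`, vertex list `c` and
exit-edge direction `ex`, the axis of its `t`-th edge, where the entry edge has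
index `0`, the internal edges have indices `1,…,c.length − 1` (edge `t` joins
`c[t−1]` and `c[t]`) and the exit edge has index `c.length`. -/
def axE (d : ℕ) (en : ℤ) (c : List Pt) (ex : ℤ) (t : ℕ) : ℕ :=
  if t = 0 then en.natAbs
  else if t = c.length then ex.natAbs
  else axisOf d (c.getD (t - 1) ptZero) (c.getD t ptZero)

/-- The edge distance of the axis `a` to the vertex with index `p` within the
extended curve `(en, c, ex)`: one less than the number of edges of the smallest
contiguous subcurve containing this vertex and an edge with axis `a`. -/
noncomputable def edgedistE (d : ℕ) (en : ℤ) (c : List Pt) (ex : ℤ) (p a : ℕ) : ℕ :=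
  sInf {m | ∃ t, t ≤ c.length ∧ axE d en c ex t = a ∧
    m = if t ≤ p then p - t else t - p - 1}

/-- Hyperorthogonality of an extended curve: every `2^n` consecutive edges
(including the entry and exit edges) have exactly `n+1` distinct axes, for all
`n ∈ {0,…,d−2}`. -/
def HyperorthogonalE (d : ℕ) (en : ℤ) (c : List Pt) (ex : ℤ) : Prop :=
  ∀ n, n ≤ d - 2 → ∀ s, s + 2 ^ n ≤ c.length + 1 →
    ((Finset.range (2 ^ n)).image (fun t => axE d en c ex (s + t))).card = n + 1

/-- The sequence of approximating curves determined by a system of signed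
permutations `σ k i` (one for each vertex `i` of the `k`-th curve):
`A_0` is the single vertex at the origin and `A_{k+1}` is obtained from `A_k` by
inflation, vertex `i` being replaced by the 1-curve `σ_{k,i}(G(d))`. -/
def buildCurve (d : ℕ) (σ : ℕ → ℕ → SignedPerm d) : ℕ → List Pt
  | 0 => [ptZero]
  | k + 1 =>
    ((List.range (buildCurve d σ k).length).map
      (fun i => grayPiece d (σ k i) ((buildCurve d σ k).getD i ptZero))).flatten

/-- `f : [0,1] → [0,1]^d` is the space-filling curve approximated by the curves
`A k`: the `i`-th vertex of `A k` corresponds to the cube `2^{−k}(v_{k,i} + [0,1]^d)`,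
and `f` maps `[i/2^{dk},(i+1)/2^{dk}]` into that cube. -/
def Approximates (d : ℕ) (A : ℕ → List Pt) (f : ℝ → Fin d → ℝ) : Prop :=
  ∀ k i, i < (A k).length → ∀ t : ℝ,
    (i : ℝ) / 2 ^ (d * k) ≤ t → t ≤ ((i : ℝ) + 1) / 2 ^ (d * k) →
    ∀ j : Fin d,
      ((((A k).getD i ptZero) ((j : ℕ) + 1) : ℝ) / 2 ^ k ≤ f t j ∧
        f t j ≤ ((((A k).getD i ptZero) ((j : ℕ) + 1) : ℝ) + 1) / 2 ^ k)

/-- The smallest axis-aligned box containing a (nonempty, bounded) set `S ⊆ ℝ^d`. -/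
noncomputable def bbox (d : ℕ) (S : Set (Fin d → ℝ)) : Set (Fin d → ℝ) :=
  Set.univ.pi fun j => Set.Icc (sInf ((fun p => p j) '' S)) (sSup ((fun p => p j) '' S))

/-! ## General inflation (arbitrary 1-curves), isometric copies, self-similarity -/

/-- `c` is a 1-curve on the translated unit cube `2·base + {0,1}^d`. -/
def IsUnitCurveAt (d : ℕ) (base : Pt) (c : List Pt) : Prop :=
  IsGridCurve d c ∧
    ∀ v : Pt, v ∈ c ↔
      ((∀ j, 1 ≤ j → j ≤ d → v j = 2 * base j ∨ v j = 2 * base j + 1) ∧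
        ∀ j, j = 0 ∨ d < j → v j = 2 * base j)

/-- `B` is obtained from `A` by (general) inflation: each vertex `v_i` of `A` is
replaced by a 1-curve on `2·v_i + {0,1}^d`, and each edge of `A` with direction `e_i`
is replaced by an edge of the same direction connecting consecutive 1-curves. -/
def IsInflation (d : ℕ) (A B : List Pt) : Prop :=
  ∃ C : ℕ → List Pt,
    B = ((List.range A.length).map C).flatten ∧
    IsGridCurve d B ∧
    (∀ i, i < A.length → IsUnitCurveAt d (A.getD i ptZero) (C i)) ∧
    (∀ i, i + 1 < A.length → ∀ e : ℤ,
      HasDir d (A.getD i ptZero) (A.getD (i + 1) ptZero) e →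
      HasDir d ((C i).getLastD ptZero) ((C (i + 1)).headD ptZero) e)

/-- `InflationChain d k X`: `X` is constructed from a single vertex by `k` steps
of inflation. -/
inductive InflationChain (d : ℕ) : ℕ → List Pt → Prop
  | base (v : Pt) : InflationChain d 0 [v]
  | step {k : ℕ} {A B : List Pt} :
      InflationChain d k A → IsInflation d A B → InflationChain d (k + 1) B

/-- The hyperoctahedral symmetry of the cube `{0,…,M}^d` given by the signed
permutation `σ`: the coordinate `|σ⁻¹(j)|` of the argument is sent to coordinate `j`,
reflected (`x ↦ M − x`) whenever `σ⁻¹(j) < 0`. -/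
def applySP (d : ℕ) (M : ℤ) (σ : SignedPerm d) (x : Pt) : Pt :=
  fun j =>
    if 1 ≤ j ∧ j ≤ d then
      if 0 ≤ σ.inv (j : ℤ) then x (σ.inv (j : ℤ)).natAbs
      else M - x (σ.inv (j : ℤ)).natAbs
    else x j

/-- `B` is an isometric copy of the curve `A` (living in a cube `{0,…,M}^d`):
a hyperoctahedral symmetry, possibly composed with reversal, followed by a translation. -/
def IsometricCopy (d : ℕ) (M : ℤ) (A B : List Pt) : Prop :=
  ∃ σ : SignedPerm d, ∃ rev : Bool, ∃ tr : Pt,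
    B = (if rev then A.reverse else A).map (fun v => fun j => applySP d M σ v j + tr j)

/-- Self-similarity of one approximation step: `B` is the concatenation of `2^d`
isometric copies of the `k`-curve `A`, connected by single edges. -/
def SelfSimilarStep (d k : ℕ) (A B : List Pt) : Prop :=
  ∃ parts : ℕ → List Pt,
    B = ((List.range (2 ^ d)).map parts).flatten ∧
    IsGridCurve d B ∧
    ∀ m, m < 2 ^ d → IsometricCopy d ((2 : ℤ) ^ k - 1) A (parts m)

/-- Coordinate `a ∈ {1,…,d}` of a point of `ℝ^d`. -/
noncomputable def coordR (d : ℕ) (x : Fin d → ℝ) (a : ℕ) : ℝ :=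
  if h : a - 1 < d then x ⟨a - 1, h⟩ else 0

/-- The hyperoctahedral symmetry of the unit cube `[0,1]^d` given by the signed
permutation `σ`. -/
noncomputable def applySPR (d : ℕ) (σ : SignedPerm d) (x : Fin d → ℝ) : Fin d → ℝ :=
  fun j =>
    if 0 ≤ σ.inv ((j : ℕ) + 1 : ℤ) then coordR d x (σ.inv ((j : ℕ) + 1 : ℤ)).natAbs
    else 1 - coordR d x (σ.inv ((j : ℕ) + 1 : ℤ)).natAbs

/-- `f` is a self-similar hyperorthogonal well-folded space-filling curve:
it is approximated by a sequence of `k`-curves, starting from a single vertex,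
in which each curve is obtained from the previous one by well-folded inflation,
all approximating curves are hyperorthogonal, and each approximating curve is the
concatenation of `2^d` isometric copies of the previous one. -/
def SSHOWFcurve (d : ℕ) (f : ℝ → Fin d → ℝ) : Prop :=
  ∃ A : ℕ → List Pt,
    A 0 = [ptZero] ∧
    (∀ k, IsInflationWF d (A k) (A (k + 1))) ∧
    (∀ k, IsKCurve d k (A k)) ∧
    (∀ k, Hyperorthogonal d (A k)) ∧
    (∀ k, SelfSimilarStep d k (A k) (A (k + 1))) ∧
    Approximates d A f

/-- Two space-filling curves are the same up to hyperoctahedral symmetry and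
reversal. -/
def curveEquiv (d : ℕ) (f g : ℝ → Fin d → ℝ) : Prop :=
  ∃ τ : SignedPerm d,
    (∀ t ∈ Set.Icc (0 : ℝ) 1, g t = applySPR d τ (f t)) ∨
    (∀ t ∈ Set.Icc (0 : ℝ) 1, g t = applySPR d τ (f (1 - t)))

/-- The direction of the entry edge of the extended child curve `C'_m` within the
inflation of the extended curve `(e0, A, e1)`. -/
def childEntryDir (d : ℕ) (A : List Pt) (e0 : ℤ) (m : ℕ) : ℤ :=
  if m = 0 then e0 else dirOf d (A.getD (m - 1) ptZero) (A.getD m ptZero)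

/-- The direction of the exit edge of the extended child curve `C'_m` within the
inflation of the extended curve `(e0, A, e1)`. -/
def childExitDir (d : ℕ) (A : List Pt) (e1 : ℤ) (m : ℕ) : ℤ :=
  if m + 1 = A.length then e1 else dirOf d (A.getD m ptZero) (A.getD (m + 1) ptZero)

/-- The local edge distance of the axis `a` to the vertex with index `i` within the
extended approximating curve `A'_k` (entry direction `e0`, exit direction `e1`)
of the system `σ`: the edge distance within the extended child curve of `A'_{k-1}`
containing this vertex. -/
noncomputable def led (d : ℕ) (σ : ℕ → ℕ → SignedPerm d) (e0 e1 : ℤ) :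
    ℕ → ℕ → ℕ → ℕ
  | 0, _, a => edgedistE d e0 (buildCurve d σ 0) e1 0 a
  | k + 1, i, a =>
    edgedistE d (childEntryDir d (buildCurve d σ k) e0 (i / 2 ^ d))
      (grayPiece d (σ k (i / 2 ^ d)) ((buildCurve d σ k).getD (i / 2 ^ d) ptZero))
      (childExitDir d (buildCurve d σ k) e1 (i / 2 ^ d))
      (i % 2 ^ d) a

/-- The system of permutations `σ` describes a sequence of extended hyperorthogonal
well-folded approximating curves with entry direction `e0` and exit direction `e1`,
in which the signs of `σ_{k,1}⁻¹` are prescribed by `s`, and the elements of every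
unsigned permutation `|σ_{k,i}|` are sorted by decreasing local edge distance. -/
def GoodSystem (d : ℕ) (e0 e1 : ℤ) (s : ℕ → ℕ → ℤ) (σ : ℕ → ℕ → SignedPerm d) : Prop :=
  (∀ k, IsKCurve d k (buildCurve d σ k)) ∧
  (∀ k, HyperorthogonalE d e0 (buildCurve d σ k) e1) ∧
  (∀ k, ¬ InCube d k (move ((buildCurve d σ k).headD ptZero) (-e0))) ∧
  (∀ k, ¬ InCube d k (move ((buildCurve d σ k).getLastD ptZero) e1)) ∧
  (∀ k j, 1 ≤ j → j ≤ d → Int.sign ((σ k 0).inv (j : ℤ)) = s k j) ∧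
  (∀ k i, i < (buildCurve d σ k).length →
    ∀ p q : ℕ, 1 ≤ p → p ≤ q → q ≤ d →
      led d σ e0 e1 k i (((σ k i).f (q : ℤ)).natAbs) ≤
        led d σ e0 e1 k i (((σ k i).f (p : ℤ)).natAbs))

/-- The Butz-Moore generalization of the Hilbert curve, described by the conditions
on its system of signed permutations: `|σ_{k,i}(d)| = 1` for the first and last
subcube, `|σ_{k,i}(d)| = max(|e_{k,i−1}|,|e_{k,i}|)` in between, all unsigned
permutations are cyclic rotations, and the entry is at the origin. -/
def ButzMoore (d : ℕ) (σ : ℕ → ℕ → SignedPerm d) : Prop :=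
  (∀ k, IsKCurve d k (buildCurve d σ k)) ∧
  (∀ k i, i < 2 ^ (d * k) → (i = 0 ∨ i = 2 ^ (d * k) - 1) →
    ((σ k i).f (d : ℤ)).natAbs = 1) ∧
  (∀ k i, 0 < i → i + 1 < 2 ^ (d * k) →
    ((σ k i).f (d : ℤ)).natAbs =
      max (dirOf d ((buildCurve d σ k).getD (i - 1) ptZero)
            ((buildCurve d σ k).getD i ptZero)).natAbs
          (dirOf d ((buildCurve d σ k).getD i ptZero)
            ((buildCurve d σ k).getD (i + 1) ptZero)).natAbs) ∧
  (∀ k i j, 1 ≤ j → j ≤ d →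
    ((σ k i).f (j : ℤ)).natAbs = ((((σ k i).f (d : ℤ)).natAbs + j - 1) % d) + 1) ∧
  (∀ k j, 1 ≤ j → j ≤ d → 0 ≤ (σ k 0).inv (j : ℤ))

/-! ## Generalized curves (diagonal edges allowed) -/

/-- A generalized edge: `w ≠ v` and every coordinate changes by at most 1. -/
def IsGenEdge (d : ℕ) (v w : Pt) : Prop :=
  v ≠ w ∧ (∀ j, 1 ≤ j → j ≤ d → |w j - v j| ≤ 1) ∧ ∀ j, j = 0 ∨ d < j → w j = v j

/-- A generalized curve on the grid (diagonal edges allowed). -/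
def IsGenCurve (d : ℕ) (c : List Pt) : Prop := c.Nodup ∧ c.Chain' (IsGenEdge d)

/-- Generalized inflation: vertices are replaced by 1-curves on the corresponding
subcubes, consecutive 1-curves being joined by a single (possibly diagonal) edge. -/
def IsGenInflation (d : ℕ) (A B : List Pt) : Prop :=
  ∃ C : ℕ → List Pt,
    B = ((List.range A.length).map C).flatten ∧
    IsGenCurve d B ∧
    (∀ i, i < A.length → IsUnitCurveAt d (A.getD i ptZero) (C i))
namespace GrayAux

def disp (l : List ℤ) : ℕ → ℤ := fun j => (l.map (fun e => if e.natAbs = j then e.sign else 0)).sum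

lemma disp_append (l1 l2 : List ℤ) (j : ℕ) : disp (l1 ++ l2) j = disp l1 j + disp l2 j := by
  simp [disp]

lemma disp_grayRev (l : List ℤ) (j : ℕ) : disp (grayRev l) j = -(disp l j) := by
  induction l with
  | nil => rfl
  | cons e l ih =>
    have h : grayRev (e :: l) = grayRev l ++ [-e] := by simp [grayRev]
    rw [h, disp_append, ih]
    simp only [disp, List.map_cons, List.sum_cons, List.map_nil, List.sum_nil,
      Int.natAbs_neg, Int.sign_neg]
    split <;> ring

lemma foldl_move (l : List ℤ) (s : Pt) : List.foldl move s l = fun j => s j + disp l j := by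
  induction l generalizing s with
  | nil => funext j; simp [disp]
  | cons e l ih =>
    funext j
    rw [List.foldl_cons, ih]
    simp only [move, disp, List.map_cons, List.sum_cons]
    rcases eq_or_ne j e.natAbs with h | h
    · rw [if_pos h, if_pos h.symm]; ring
    · rw [if_neg h, if_neg (Ne.symm h)]; ring

lemma mem_scanl (l : List ℤ) (s v : Pt) :
    v ∈ List.scanl move s l ↔ ∃ n, n ≤ l.length ∧ v = List.foldl move s (l.take n) := by
  induction l generalizing s with
  | nil =>
    simp only [List.scanl_nil, List.mem_singleton, List.length_nil, Nat.le_zero]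
    constructor
    · rintro rfl; exact ⟨0, rfl, rfl⟩
    · rintro ⟨n, rfl, rfl⟩; rfl
  | cons e l ih =>
    simp only [List.scanl_cons, List.singleton_append, List.mem_cons, ih]
    constructor
    · rintro (rfl | ⟨n, hn, rfl⟩)
      · exact ⟨0, by simp, by simp⟩
      · exact ⟨n + 1, by simpa using hn, by simp⟩
    · rintro ⟨n, hn, rfl⟩
      cases n with
      | zero => left; simp
      | succ m => right; exact ⟨m, by simpa using hn, by simp⟩

lemma scanl_cons' (s : Pt) (l : List ℤ) : ∃ t, List.scanl move s l = s :: t := by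
  cases l with
  | nil => exact ⟨[], rfl⟩
  | cons e l => exact ⟨_, List.scanl_cons ..⟩

lemma getLast?_scanl (l : List ℤ) (s : Pt) :
    (List.scanl move s l).getLast? = some (List.foldl move s l) := by
  induction l generalizing s with
  | nil => rfl
  | cons e l ih =>
    rw [List.scanl_cons]
    obtain ⟨t, ht⟩ := scanl_cons' (move s e) l
    rw [ht, List.getLast?_cons_cons, ← ht, ih, List.foldl_cons]

lemma G_succ (d : ℕ) : G (d + 1) = G d ++ [((d : ℤ) + 1)] ++ grayRev (G d) := rfl

lemma grayRev_length (l : List ℤ) : (grayRev l).length = l.length := by simp [grayRev]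

lemma G_succ_length (d : ℕ) : (G (d + 1)).length = 2 * (G d).length + 1 := by
  rw [G_succ]; simp [grayRev_length]; omega

lemma disp_single (d j : ℕ) : disp [((d : ℤ) + 1)] j = if j = d + 1 then 1 else 0 := by
  have h1 : ((d : ℤ) + 1).natAbs = d + 1 := by
    rw [show ((d : ℤ) + 1) = ((d + 1 : ℕ) : ℤ) by push_cast; ring, Int.natAbs_natCast]
  have h2 : ((d : ℤ) + 1).sign = 1 := Int.sign_eq_one_of_pos (by positivity)
  simp [disp, h1, h2, eq_comm]

lemma take_A1 (d n : ℕ) (hn : n ≤ (G d).length) : (G (d + 1)).take n = (G d).take n := by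
  rw [G_succ, List.take_append_of_le_length (by simp; omega),
    List.take_append_of_le_length hn]

lemma take_grayRev (l : List ℤ) (m : ℕ) (hm : m ≤ l.length) :
    (grayRev l).take m = grayRev (l.drop (l.length - m)) := by
  unfold grayRev
  rw [List.take_reverse, List.map_drop]
  congr 2
  simp

lemma disp_A2 (d k : ℕ) (hk : k ≤ (G d).length) (j : ℕ) :
    disp ((G (d + 1)).take (2 * (G d).length + 1 - k)) j
      = disp [((d : ℤ) + 1)] j + disp ((G d).take k) j := by
  have hkey : (G (d + 1)).take (2 * (G d).length + 1 - k)
      = G d ++ (((d : ℤ) + 1) :: grayRev ((G d).drop k)) := by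
    rw [G_succ, List.append_assoc, List.take_append,
      List.take_of_length_le (by omega)]
    congr 1
    have h1 : 2 * (G d).length + 1 - k - (G d).length = ((G d).length - k) + 1 := by omega
    rw [h1, List.singleton_append, List.take_succ_cons]
    congr 1
    rw [take_grayRev _ _ (by omega)]
    congr 2
    omega
  rw [hkey, disp_append]
  have hsplit : disp (G d) j = disp ((G d).take k) j + disp ((G d).drop k) j := by
    conv_lhs => rw [← List.take_append_drop k (G d)]
    exact disp_append _ _ _
  have : disp (((d : ℤ) + 1) :: grayRev ((G d).drop k)) j
      = disp [((d : ℤ) + 1)] j + disp (grayRev ((G d).drop k)) j := by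
    simpa using disp_append [((d : ℤ) + 1)] (grayRev ((G d).drop k)) j
  rw [this, disp_grayRev]
  omega

lemma key (d : ℕ) (v : Pt) :
    (∃ n, n ≤ (G d).length ∧ ∀ j, v j = disp ((G d).take n) j) ↔
      ((∀ j, 1 ≤ j → j ≤ d → v j = 0 ∨ v j = 1) ∧ ∀ j, j = 0 ∨ d < j → v j = 0) := by
  induction d generalizing v with
  | zero =>
    constructor
    · rintro ⟨n, hn, hv⟩
      refine ⟨fun j h1 h2 => by omega, fun j _ => ?_⟩
      rw [hv j]; simp [G, disp]
    · rintro ⟨h1, h2⟩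
      refine ⟨0, le_refl _, fun j => ?_⟩
      rw [h2 j (by omega)]; simp [disp]
  | succ d ih =>
    constructor
    · rintro ⟨n, hn, hv⟩
      rw [G_succ_length] at hn
      by_cases hnL : n ≤ (G d).length
      · have hv' : ∀ j, v j = disp ((G d).take n) j := by
          intro j; rw [hv j, take_A1 d n hnL]
        obtain ⟨h1, h2⟩ := (ih v).mp ⟨n, hnL, hv'⟩
        refine ⟨fun j hj1 hj2 => ?_, fun j hj => ?_⟩
        · rcases Nat.lt_or_ge j (d + 1) with h | h
          · exact h1 j hj1 (by omega)
          · left; exact h2 j (by omega)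
        · exact h2 j (by omega)
      · set k := 2 * (G d).length + 1 - n with hk
        have hkL : k ≤ (G d).length := by omega
        have hn' : n = 2 * (G d).length + 1 - k := by omega
        have hv' : ∀ j, v j = disp [((d : ℤ) + 1)] j + disp ((G d).take k) j := by
          intro j; rw [hv j, hn', disp_A2 d k hkL]
        obtain ⟨h1, h2⟩ := (ih (fun j => disp ((G d).take k) j)).mp ⟨k, hkL, fun j => rfl⟩
        have h1' : ∀ j, 1 ≤ j → j ≤ d → disp ((G d).take k) j = 0 ∨ disp ((G d).take k) j = 1 := h1
        have h2' : ∀ j, j = 0 ∨ d < j → disp ((G d).take k) j = 0 := h2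
        refine ⟨fun j hj1 hj2 => ?_, fun j hj => ?_⟩
        · rw [hv' j, disp_single]
          by_cases hjd : j = d + 1
          · right; rw [if_pos hjd, hjd, h2' (d + 1) (by omega)]; norm_num
          · rw [if_neg hjd]
            have := h1' j hj1 (by omega)
            omega
        · rw [hv' j, disp_single, if_neg (by omega), h2' j (by omega)]; norm_num
    · rintro ⟨h1, h2⟩
      by_cases hvd : v (d + 1) = 0
      · have hc : (∀ j, 1 ≤ j → j ≤ d → v j = 0 ∨ v j = 1) ∧
            ∀ j, j = 0 ∨ d < j → v j = 0 := by
          refine ⟨fun j hj1 hj2 => h1 j hj1 (by omega), fun j hj => ?_⟩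
          rcases hj with hj | hj
          · exact h2 j (Or.inl hj)
          · by_cases hjd : j = d + 1
            · rw [hjd]; exact hvd
            · exact h2 j (Or.inr (by omega))
        obtain ⟨n, hn, hv⟩ := (ih v).mpr hc
        exact ⟨n, by rw [G_succ_length]; omega,
          fun j => by rw [take_A1 d n hn]; exact hv j⟩
      · have hvd1 : v (d + 1) = 1 := by
          rcases h1 (d + 1) (by omega) (le_refl _) with h | h
          · exact absurd h hvd
          · exact h
        set w : Pt := fun j => if j = d + 1 then 0 else v j with hw
        have hc : (∀ j, 1 ≤ j → j ≤ d → w j = 0 ∨ w j = 1) ∧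
            ∀ j, j = 0 ∨ d < j → w j = 0 := by
          refine ⟨fun j hj1 hj2 => ?_, fun j hj => ?_⟩
          · simp only [hw, if_neg (by omega : ¬ j = d + 1)]
            exact h1 j hj1 (by omega)
          · by_cases hjd : j = d + 1
            · simp [hw, hjd]
            · simp only [hw, if_neg hjd]
              rcases hj with hj | hj
              · exact h2 j (Or.inl hj)
              · exact h2 j (Or.inr (by omega))
        obtain ⟨n, hn, hv⟩ := (ih w).mpr hc
        refine ⟨2 * (G d).length + 1 - n, by rw [G_succ_length]; omega, fun j => ?_⟩
        rw [disp_A2 d n hn, disp_single]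
        by_cases hjd : j = d + 1
        · rw [if_pos hjd, hjd, hvd1]
          have := hv (d + 1)
          simp only [hw, if_pos rfl] at this
          omega
        · rw [if_neg hjd]
          have := hv j
          simp only [hw, if_neg hjd] at this
          omega

lemma disp_G_succ (d j : ℕ) : disp (G (d + 1)) j = if j = d + 1 then 1 else 0 := by
  rw [G_succ, disp_append, disp_append, disp_grayRev, disp_single]; ring

end GrayAux

/-- For `d ≥ 1`, the path `G⁰(d)` starting at the origin with edge
directions `G(d)` has vertex set exactly `{0,1}^d`, and its last vertex is the
point `(0,…,0,1)` whose `d`-th coordinate is `1` and whose other coordinates are `0`. -/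
theorem gray_path_vertices (d : ℕ) (hd : 1 ≤ d) :
    (∀ v : Pt, v ∈ pathVertices ptZero (G d) ↔
      ((∀ j, 1 ≤ j → j ≤ d → v j = 0 ∨ v j = 1) ∧ ∀ j, j = 0 ∨ d < j → v j = 0)) ∧
    (pathVertices ptZero (G d)).getLast? =
      some (fun j => if j = d then 1 else 0) := by
  constructor
  · intro v
    rw [pathVertices, GrayAux.mem_scanl, ← GrayAux.key]
    constructor
    · rintro ⟨n, hn, rfl⟩
      exact ⟨n, hn, fun j => by rw [GrayAux.foldl_move]; simp [ptZero]⟩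
    · rintro ⟨n, hn, hv⟩
      exact ⟨n, hn, by funext j; rw [hv j, GrayAux.foldl_move]; simp [ptZero]⟩
  · rw [pathVertices, GrayAux.getLast?_scanl, GrayAux.foldl_move]
    congr 1
    funext j
    obtain ⟨e, rfl⟩ : ∃ e, d = e + 1 := ⟨d - 1, by omega⟩
    rw [GrayAux.disp_G_succ]
    simp [ptZero]
end

section
/- For every d ≥ 1 and every n with 1 ≤ n ≤ 2^d − 1, the set of axes of the first n directions of G(d) is exactly {1,…,m}, where m = 1 + ⌊log₂ n⌋ = ⌈log₂(n+1)⌉; the same holds for the set of axes of the last n directions of G(d). -/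
open MeasureTheory

lemma grayRev_length (l : List ℤ) : (grayRev l).length = l.length := by
  simp [grayRev]

lemma G_length (d : ℕ) : (G d).length = 2 ^ d - 1 := by
  induction d with
  | zero => simp [G]
  | succ d ih =>
    have : 1 ≤ 2 ^ d := Nat.one_le_two_pow
    simp [G, grayRev_length, ih, pow_succ]
    omega

lemma mem_grayRev {l : List ℤ} {e : ℤ} : e ∈ grayRev l ↔ -e ∈ l := by
  simp only [grayRev, List.mem_reverse, List.mem_map]
  constructor
  · rintro ⟨x, hx, rfl⟩; simpa using hx
  · intro h; exact ⟨-e, h, by ring⟩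

lemma natAbs_mem_G' (d : ℕ) : ∀ e ∈ G d, 1 ≤ e.natAbs ∧ e.natAbs ≤ d := by
  induction d with
  | zero => simp [G]
  | succ d ih =>
    intro e h
    simp only [G, List.mem_append, List.mem_singleton, mem_grayRev] at h
    rcases h with (h | h) | h
    · have := ih e h; omega
    · subst h
      have : ((d : ℤ) + 1).natAbs = d + 1 := by omega
      omega
    · have := ih (-e) h
      rw [Int.natAbs_neg] at this
      omega

lemma natAbs_mem_G {d : ℕ} {e : ℤ} (h : e ∈ G d) : 1 ≤ e.natAbs ∧ e.natAbs ≤ d :=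
  natAbs_mem_G' d e h

lemma G_axes (d : ℕ) (a : ℕ) : (∃ e ∈ G d, e.natAbs = a) ↔ 1 ≤ a ∧ a ≤ d := by
  constructor
  · rintro ⟨e, he, rfl⟩; exact natAbs_mem_G he
  · rintro ⟨h1, h2⟩
    induction d with
    | zero => omega
    | succ d ih =>
      by_cases hc : a ≤ d
      · obtain ⟨e, he, hee⟩ := ih hc
        exact ⟨e, by simp [G, he], hee⟩
      · refine ⟨(d : ℤ) + 1, by simp [G], by omega⟩

lemma grayRev_map_natAbs (l : List ℤ) :
    (grayRev l).map Int.natAbs = (l.map Int.natAbs).reverse := by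
  simp [grayRev, Function.comp_def]

lemma G_natAbs_reverse (d : ℕ) :
    ((G d).map Int.natAbs).reverse = (G d).map Int.natAbs := by
  induction d with
  | zero => simp [G]
  | succ d ih =>
    simp only [G, List.map_append, List.reverse_append, grayRev_map_natAbs, ih,
      List.reverse_reverse, List.map_cons, List.map_nil]
    simp [ih, List.append_assoc]

lemma G_take_axes : ∀ d n, 1 ≤ n → n ≤ 2 ^ d - 1 →
    ∀ a, (∃ e ∈ (G d).take n, e.natAbs = a) ↔ 1 ≤ a ∧ a ≤ Nat.log 2 n + 1 := by
  intro d
  induction d with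
  | zero => intro n h1 h2; omega
  | succ d ih =>
    intro n h1 h2 a
    have h2d : 1 ≤ 2 ^ d := Nat.one_le_two_pow
    by_cases hc : n ≤ 2 ^ d - 1
    · have htake : (G (d+1)).take n = (G d).take n := by
        show (G d ++ [((d:ℤ)+1)] ++ grayRev (G d)).take n = _
        rw [List.append_assoc, List.take_append_of_le_length (by rw [G_length]; exact hc)]
      rw [htake]; exact ih n h1 hc a
    · push_neg at hc
      have hn : 2 ^ d ≤ n := by omega
      have hlog : Nat.log 2 n = d := Nat.log_eq_of_pow_le_of_lt_pow hn (by
        have : 1 ≤ 2 ^ (d+1) := Nat.one_le_two_pow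
        omega)
      rw [hlog]
      have hsplit : G (d+1) = (G d ++ [((d:ℤ)+1)]) ++ grayRev (G d) := by
        show G d ++ [((d:ℤ)+1)] ++ grayRev (G d) = _
        simp [List.append_assoc]
      have hlen : (G d ++ [((d:ℤ)+1)]).length = 2 ^ d := by
        simp [G_length]; omega
      have hpref : ∀ e ∈ G d ++ [((d:ℤ)+1)], e ∈ (G (d+1)).take n := by
        intro e he
        rw [hsplit, List.take_append,
          List.take_of_length_le (by omega)]
        exact List.mem_append_left _ he
      constructor
      · rintro ⟨e, he, rfl⟩
        have := natAbs_mem_G (List.mem_of_mem_take he)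
        omega
      · rintro ⟨ha1, ha2⟩
        by_cases hca : a ≤ d
        · obtain ⟨e, he, hee⟩ := (G_axes d a).mpr ⟨ha1, hca⟩
          exact ⟨e, hpref e (List.mem_append_left _ he), hee⟩
        · refine ⟨(d:ℤ)+1, hpref _ (List.mem_append_right _ (by simp)), by omega⟩

lemma log_clog (n : ℕ) (hn : 1 ≤ n) : Nat.log 2 n + 1 = Nat.clog 2 (n + 1) := by
  have hub : Nat.clog 2 (n+1) ≤ Nat.log 2 n + 1 := by
    apply (Nat.clog_le_iff_le_pow one_lt_two).mpr
    have := Nat.lt_pow_succ_log_self one_lt_two n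
    omega
  have hlb : ¬ Nat.clog 2 (n+1) ≤ Nat.log 2 n := by
    intro h
    have h1 := (Nat.clog_le_iff_le_pow one_lt_two).mp h
    have h2 := Nat.pow_log_le_self 2 (by omega : n ≠ 0)
    omega
  omega


/-- For `d ≥ 1` and `1 ≤ n ≤ 2^d − 1`, the set of axes of the first
`n` directions of `G(d)` is exactly `{1,…,m}` with
`m = 1 + ⌊log₂ n⌋ = ⌈log₂(n+1)⌉`, and the same holds for the last `n` directions. -/
theorem gray_prefix_axes (d n : ℕ) (hd : 1 ≤ d) (hn1 : 1 ≤ n) (hn2 : n ≤ 2 ^ d - 1) :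
    Nat.log 2 n + 1 = Nat.clog 2 (n + 1) ∧
    {a : ℕ | ∃ e ∈ (G d).take n, e.natAbs = a} = Set.Icc 1 (Nat.log 2 n + 1) ∧
    {a : ℕ | ∃ e ∈ (G d).reverse.take n, e.natAbs = a} =
      Set.Icc 1 (Nat.log 2 n + 1) := by
  have key : ((G d).reverse.take n).map Int.natAbs = ((G d).take n).map Int.natAbs := by
    rw [List.map_take, List.map_reverse, G_natAbs_reverse, ← List.map_take]
  refine ⟨log_clog n hn1, ?_, ?_⟩
  · ext a
    simpa using G_take_axes d n hn1 hn2 a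
  · ext a
    simp only [Set.mem_setOf_eq, Set.mem_Icc]
    rw [← List.mem_map (f := Int.natAbs), key, List.mem_map]
    exact G_take_axes d n hn1 hn2 a
end

section
/- Let d ≥ 1, k ≥ 0 and K = 2^{dk}. Let A_k be a well-folded k-curve with vertices v_1,…,v_K and edge directions e_1,…,e_{K−1}, and let σ_1,…,σ_K be signed permutations. Form A_{k+1} by replacing each vertex v_i by the 1-curve σ_i(G(d)) translated into the cube 2·v_i + {0,1}^d and each edge of direction e_i by an edge of direction e_i from the last vertex of the i-th 1-curve to the first vertex of the (i+1)-st. Then A_{k+1} is a valid well-folded (k+1)-curve if and only if for each 1 ≤ i < K: (i) for every j ∈ {1,…,d}, sgn(σ_{i+1}^{−1}(j)) = sgn(σ_i^{−1}(j)) if and only if j equals neither or both of |σ_i(d)| and |e_i|, and otherwise sgn(σ_{i+1}^{−1}(j)) = −sgn(σ_i^{−1}(j)); and (ii) sgn(σ_{i+1}^{−1}(e_i)) = 1. -/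
open MeasureTheory

/-! ### Auxiliary machinery for the proof of the theorem below -/

namespace WFAux

open List

lemma isDir_pos {d : ℕ} {g : ℤ} (h : IsDir d g) : 1 ≤ g.natAbs ∧ g.natAbs ≤ d :=
  ⟨by have := h.1; omega, h.2⟩

lemma isDir_coe {d j : ℕ} (h1 : 1 ≤ j) (h2 : j ≤ d) : IsDir d (j : ℤ) :=
  ⟨by omega, by omega⟩

lemma isDir_neg {d : ℕ} {g : ℤ} (h : IsDir d g) : IsDir d (-g) :=
  ⟨by have := h.1; omega, by have := h.2; omega⟩

lemma sign_dichotomy {t : ℤ} (h : t ≠ 0) : t.sign = 1 ∧ 0 < t ∨ t.sign = -1 ∧ t < 0 := by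
  rcases lt_or_gt_of_ne h with h' | h'
  · exact Or.inr ⟨Int.sign_eq_neg_one_of_neg h', h'⟩
  · exact Or.inl ⟨Int.sign_eq_one_of_pos h', h'⟩

lemma sign_eq_iff {s t : ℤ} (hs : s ≠ 0) (ht : t ≠ 0) :
    (Int.sign s = Int.sign t) ↔ (0 ≤ s ↔ 0 ≤ t) := by
  rcases sign_dichotomy hs with ⟨h1, h2⟩ | ⟨h1, h2⟩ <;>
    rcases sign_dichotomy ht with ⟨h3, h4⟩ | ⟨h3, h4⟩ <;> rw [h1, h3] <;> omega

def addPt (c x : Pt) : Pt := fun j => x j + c j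

def unitPt (m : ℕ) : Pt := fun j => if j = m then 1 else 0

def endpt (s : Pt) (l : List ℤ) : Pt := l.foldl move s

lemma addPt_injective (c : Pt) : Function.Injective (addPt c) := by
  intro x y h
  funext j
  have := congrFun h j
  simp only [addPt] at this
  omega

lemma move_move_neg (x : Pt) (g : ℤ) : move (move x g) (-g) = x := by
  funext j
  simp only [move, Int.natAbs_neg, Int.sign_neg]
  split_ifs with h
  · ring
  · rfl

lemma move_addPt (c x : Pt) (g : ℤ) : move (addPt c x) g = addPt c (move x g) := by
  funext j
  simp only [move, addPt]
  split_ifs <;> ring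

lemma pathVertices_nil (s : Pt) : pathVertices s [] = [s] := rfl

lemma pathVertices_cons (s : Pt) (g : ℤ) (l : List ℤ) :
    pathVertices s (g :: l) = s :: pathVertices (move s g) l := List.scanl_cons

lemma pathVertices_ne_nil (s : Pt) (l : List ℤ) : pathVertices s l ≠ [] := by
  cases l <;> simp [pathVertices]

lemma pathVertices_head? (s : Pt) (l : List ℤ) : (pathVertices s l).head? = some s := by
  cases l <;> simp [pathVertices_cons, pathVertices_nil]

lemma endpt_nil (s : Pt) : endpt s [] = s := rfl

lemma endpt_cons (s : Pt) (g : ℤ) (l : List ℤ) : endpt s (g :: l) = endpt (move s g) l := rfl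

lemma endpt_append (s : Pt) (l1 l2 : List ℤ) : endpt s (l1 ++ l2) = endpt (endpt s l1) l2 := by
  unfold endpt
  exact List.foldl_append

lemma pathVertices_getLast? (s : Pt) (l : List ℤ) :
    (pathVertices s l).getLast? = some (endpt s l) := by
  induction l generalizing s with
  | nil => rfl
  | cons g t ih =>
    rw [pathVertices_cons]
    cases ht : pathVertices (move s g) t with
    | nil => exact absurd ht (pathVertices_ne_nil _ _)
    | cons a u =>
      rw [List.getLast?_cons_cons, ← ht, ih]
      rfl

lemma pathVertices_append (s : Pt) (l1 l2 : List ℤ) :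
    pathVertices s (l1 ++ l2) = pathVertices s l1 ++ (pathVertices (endpt s l1) l2).tail := by
  induction l1 generalizing s with
  | nil => cases l2 <;> simp [pathVertices_cons, pathVertices_nil, endpt_nil]
  | cons g t ih =>
    rw [List.cons_append, pathVertices_cons, ih, pathVertices_cons, endpt_cons]
    rfl

lemma endpt_addPt (c s : Pt) (l : List ℤ) : endpt (addPt c s) l = addPt c (endpt s l) := by
  induction l generalizing s with
  | nil => rfl
  | cons g t ih => rw [endpt_cons, move_addPt, ih, endpt_cons]

lemma pathVertices_addPt (c s : Pt) (l : List ℤ) :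
    pathVertices (addPt c s) l = (pathVertices s l).map (addPt c) := by
  induction l generalizing s with
  | nil => rfl
  | cons g t ih => rw [pathVertices_cons, pathVertices_cons, List.map_cons, move_addPt, ih]

lemma grayRev_cons (g : ℤ) (l : List ℤ) : grayRev (g :: l) = grayRev l ++ [-g] := by
  simp [grayRev]

lemma grayRev_mem {a : ℤ} {l : List ℤ} : a ∈ grayRev l ↔ -a ∈ l := by
  simp only [grayRev, List.mem_reverse, List.mem_map]
  constructor
  · rintro ⟨b, hb, rfl⟩
    simpa using hb
  · intro h
    exact ⟨-a, h, by ring⟩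

lemma endpt_grayRev (s : Pt) (l : List ℤ) : endpt (endpt s l) (grayRev l) = s := by
  induction l generalizing s with
  | nil => rfl
  | cons g t ih =>
    rw [grayRev_cons, endpt_cons, endpt_append, ih]
    exact move_move_neg s g

lemma pathVertices_grayRev (s : Pt) (l : List ℤ) :
    pathVertices (endpt s l) (grayRev l) = (pathVertices s l).reverse := by
  induction l generalizing s with
  | nil => rfl
  | cons g t ih =>
    rw [grayRev_cons, endpt_cons, pathVertices_append, ih, endpt_grayRev,
      show pathVertices (move s g) [-g] = [move s g, move (move s g) (-g)] from rfl,
      move_move_neg, List.tail_cons, pathVertices_cons s g t, List.reverse_cons]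

lemma pathVertices_map_comm {F : Pt → Pt} {φ : ℤ → ℤ} {l : List ℤ}
    (h : ∀ g ∈ l, ∀ x, F (move x g) = move (F x) (φ g)) :
    ∀ s : Pt, pathVertices (F s) (l.map φ) = (pathVertices s l).map F := by
  induction l with
  | nil => intro s; rfl
  | cons g t ih =>
    intro s
    rw [List.map_cons, pathVertices_cons, pathVertices_cons, List.map_cons,
      ← h g List.mem_cons_self, ih (fun g' hg' x => h g' (List.mem_cons_of_mem _ hg') x)]

lemma endpt_map_comm {F : Pt → Pt} {φ : ℤ → ℤ} {l : List ℤ}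
    (h : ∀ g ∈ l, ∀ x, F (move x g) = move (F x) (φ g)) :
    ∀ s : Pt, endpt (F s) (l.map φ) = F (endpt s l) := by
  induction l with
  | nil => intro s; rfl
  | cons g t ih =>
    intro s
    rw [List.map_cons, endpt_cons, endpt_cons, ← h g List.mem_cons_self,
      ih (fun g' hg' x => h g' (List.mem_cons_of_mem _ hg') x)]

lemma pathVertices_chain' {d : ℕ} {l : List ℤ} (h : ∀ g ∈ l, IsDir d g) (s : Pt) :
    List.Chain' (IsEdge d) (pathVertices s l) := by
  induction l generalizing s with
  | nil => simp [pathVertices]; exact List.isChain_singleton s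
  | cons g t ih =>
    rw [pathVertices_cons, List.Chain', List.isChain_cons]
    refine ⟨?_, ih (fun g' hg' => h g' (List.mem_cons_of_mem _ hg')) _⟩
    intro y hy
    rw [Option.mem_def, pathVertices_head?] at hy
    injection hy with hy
    subst hy
    exact ⟨g, h g List.mem_cons_self, rfl⟩

lemma G_isDir (d : ℕ) : ∀ g ∈ G d, IsDir d g := by
  induction d with
  | zero => intro g hg; simp [G] at hg
  | succ n ih =>
    intro g hg
    simp only [G, List.append_assoc, List.mem_append, List.mem_singleton] at hg
    rcases hg with hg | hg | hg
    · exact ⟨(ih g hg).1, le_trans (ih g hg).2 (Nat.le_succ n)⟩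
    · subst hg; exact ⟨by omega, by omega⟩
    · have h2 := ih (-g) (grayRev_mem.mp hg)
      have h3 := isDir_neg h2
      rw [neg_neg] at h3
      exact ⟨h3.1, le_trans h3.2 (Nat.le_succ n)⟩

/-- The standard Gray-code path on the unit cube, starting at the origin. -/
def stdPath (d : ℕ) : List Pt := pathVertices ptZero (G d)

lemma stdPath_zero : stdPath 0 = [ptZero] := rfl

lemma stdPath_succ (d : ℕ) :
    stdPath (d + 1) = stdPath d ++ ((stdPath d).map (addPt (unitPt (d + 1)))).reverse := by
  have hmove : ∀ x : Pt, move x ((d : ℤ) + 1) = addPt (unitPt (d + 1)) x := by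
    intro x
    funext j
    have h1 : ((d : ℤ) + 1).natAbs = d + 1 := by omega
    have h2 : ((d : ℤ) + 1).sign = 1 := Int.sign_eq_one_of_pos (by positivity)
    simp only [move, addPt, unitPt, h1, h2]
    split_ifs <;> omega
  show pathVertices ptZero (G d ++ [(d : ℤ) + 1] ++ grayRev (G d)) = _
  rw [List.append_assoc, pathVertices_append]
  congr 1
  rw [show ([(d : ℤ) + 1] ++ grayRev (G d)) = ((d : ℤ) + 1) :: grayRev (G d) from rfl,
    pathVertices_cons, List.tail_cons, hmove,
    show addPt (unitPt (d + 1)) (endpt ptZero (G d)) =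
      endpt (addPt (unitPt (d + 1)) ptZero) (G d) from (endpt_addPt _ _ _).symm,
    pathVertices_grayRev, pathVertices_addPt]
  rfl

lemma endpt_G_succ (d : ℕ) : endpt ptZero (G (d + 1)) = addPt (unitPt (d + 1)) ptZero := by
  have hmove : ∀ x : Pt, move x ((d : ℤ) + 1) = addPt (unitPt (d + 1)) x := by
    intro x
    funext j
    have h1 : ((d : ℤ) + 1).natAbs = d + 1 := by omega
    have h2 : ((d : ℤ) + 1).sign = 1 := Int.sign_eq_one_of_pos (by positivity)
    simp only [move, addPt, unitPt, h1, h2]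
    split_ifs <;> omega
  show endpt ptZero (G d ++ [(d : ℤ) + 1] ++ grayRev (G d)) = _
  rw [List.append_assoc, endpt_append,
    show ([(d : ℤ) + 1] ++ grayRev (G d)) = ((d : ℤ) + 1) :: grayRev (G d) from rfl,
    endpt_cons, hmove,
    show addPt (unitPt (d + 1)) (endpt ptZero (G d)) =
      endpt (addPt (unitPt (d + 1)) ptZero) (G d) from (endpt_addPt _ _ _).symm,
    endpt_grayRev]

lemma stdPath_endpt {d : ℕ} (hd : 1 ≤ d) : endpt ptZero (G d) = unitPt d := by
  obtain ⟨m, rfl⟩ : ∃ m, d = m + 1 := ⟨d - 1, by omega⟩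
  rw [endpt_G_succ]
  funext j
  simp [addPt, ptZero]

/-- Corners of the unit cube `{0,1}^d`. -/
def UnitCorner (d : ℕ) (x : Pt) : Prop :=
  (∀ j, 1 ≤ j → j ≤ d → x j = 0 ∨ x j = 1) ∧ ∀ j, j = 0 ∨ d < j → x j = 0

lemma stdPath_mem (d : ℕ) : ∀ x : Pt, x ∈ stdPath d ↔ UnitCorner d x := by
  induction d with
  | zero =>
    intro x
    rw [stdPath_zero, List.mem_singleton]
    constructor
    · rintro rfl
      exact ⟨fun j h1 h2 => by omega, fun j _ => rfl⟩
    · intro h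
      funext j
      exact h.2 j (by omega)
  | succ n ih =>
    intro x
    rw [stdPath_succ, List.mem_append, List.mem_reverse, List.mem_map]
    constructor
    · rintro (hx | ⟨y, hy, rfl⟩)
      · obtain ⟨h1, h2⟩ := (ih x).mp hx
        refine ⟨fun j hj1 hj2 => ?_, fun j hj => h2 j (by omega)⟩
        by_cases hj : j = n + 1
        · subst hj; exact Or.inl (h2 _ (by omega))
        · exact h1 j hj1 (by omega)
      · obtain ⟨h1, h2⟩ := (ih y).mp hy
        constructor
        · intro j hj1 hj2
          show y j + unitPt (n + 1) j = 0 ∨ y j + unitPt (n + 1) j = 1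
          simp only [unitPt]
          by_cases hj : j = n + 1
          · subst hj
            have := h2 (n + 1) (by omega)
            rw [if_pos rfl]
            omega
          · rw [if_neg hj]
            rcases h1 j hj1 (by omega) with h | h <;> omega
        · intro j hj
          show y j + unitPt (n + 1) j = 0
          simp only [unitPt]
          rw [if_neg (by omega)]
          have := h2 j (by omega)
          omega
    · intro h
      rcases h.1 (n + 1) (by omega) le_rfl with hx0 | hx1
      · left
        apply (ih x).mpr
        refine ⟨fun j h1 h2 => h.1 j h1 (by omega), fun j hj => ?_⟩
        by_cases hj2 : j = n + 1
        · subst hj2; exact hx0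
        · exact h.2 j (by omega)
      · right
        refine ⟨fun m => x m - unitPt (n + 1) m, ?_, ?_⟩
        · apply (ih _).mpr
          constructor
          · intro j h1 h2
            simp only [unitPt]
            rw [if_neg (by omega)]
            rcases h.1 j h1 (by omega) with hh | hh <;> omega
          · intro j hj
            simp only [unitPt]
            by_cases hj2 : j = n + 1
            · subst hj2
              rw [if_pos rfl]
              omega
            · rw [if_neg hj2]
              have := h.2 j (by omega)
              omega
        · funext m
          show (x m - unitPt (n + 1) m) + unitPt (n + 1) m = x m
          ring

lemma stdPath_nodup (d : ℕ) : (stdPath d).Nodup := by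
  induction d with
  | zero => rw [stdPath_zero]; simp
  | succ n ih =>
    rw [stdPath_succ, List.nodup_append]
    refine ⟨ih, by rw [List.nodup_reverse]; exact ih.map (addPt_injective _), ?_⟩
    intro x hx z hx2
    rw [List.mem_reverse, List.mem_map] at hx2
    obtain ⟨y, hy, rfl⟩ := hx2
    intro hxy
    subst hxy
    have h1 := ((stdPath_mem n _).mp hx).2 (n + 1) (by omega)
    have h2 := ((stdPath_mem n y).mp hy).2 (n + 1) (by omega)
    simp [addPt, unitPt] at h1
    have h3 := h1 ▸ h2
    omega

end WFAux


namespace WFAux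

variable {d : ℕ}

lemma inv_abs_eq_iff (σ : SignedPerm d) {j m : ℕ} (hj1 : 1 ≤ j) (hj2 : j ≤ d)
    (hm1 : 1 ≤ m) (hm2 : m ≤ d) :
    (σ.inv (j : ℤ)).natAbs = m ↔ (σ.f (m : ℤ)).natAbs = j := by
  constructor
  · intro h
    have h1 := σ.right_inv (j : ℤ) (isDir_coe hj1 hj2)
    rcases Int.natAbs_eq_iff.mp h with h' | h'
    · rw [← h', h1]
      omega
    · have h2 : σ.f (m : ℤ) = -(j : ℤ) := by
        rw [show (m : ℤ) = -σ.inv (j : ℤ) by omega, σ.neg, h1]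
      rw [h2]
      omega
  · intro h
    have h1 := σ.left_inv (m : ℤ) (isDir_coe hm1 hm2)
    rcases Int.natAbs_eq_iff.mp h with h' | h'
    · rw [← h', h1]
      omega
    · have h2 : σ.inv (j : ℤ) = -(m : ℤ) := by
        rw [show (j : ℤ) = -σ.f (m : ℤ) by omega, σ.neg_inv, h1]
      rw [h2]
      omega

/-- The cube isometry (with translation into `2·v + {0,1}^d`) induced by a signed
permutation `σ`. -/
def Fmap (d : ℕ) (σ : SignedPerm d) (v : Pt) (x : Pt) : Pt := fun j =>
  if 1 ≤ j ∧ j ≤ d then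
    if 0 ≤ σ.inv (j : ℤ) then 2 * v j + x (σ.inv (j : ℤ)).natAbs
    else 2 * v j + 1 - x (σ.inv (j : ℤ)).natAbs
  else 2 * v j + x j

lemma Fmap_move (σ : SignedPerm d) (v : Pt) {g : ℤ} (hg : IsDir d g) (x : Pt) :
    Fmap d σ v (move x g) = move (Fmap d σ v x) (σ.f g) := by
  have hfg : IsDir d (σ.f g) := σ.maps g hg
  have hfgn := isDir_pos hfg
  have hgn := isDir_pos hg
  funext j
  by_cases hj : 1 ≤ j ∧ j ≤ d
  · have hjd : IsDir d (j : ℤ) := isDir_coe hj.1 hj.2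
    have hu : IsDir d (σ.inv (j : ℤ)) := σ.maps_inv _ hjd
    have hfu : σ.f (σ.inv (j : ℤ)) = j := σ.right_inv _ hjd
    by_cases hc : j = (σ.f g).natAbs
    · have hsj : Int.sign ((j : ℕ) : ℤ) = 1 := Int.sign_eq_one_of_pos (by exact_mod_cast hj.1)
      have hgs : g.sign = 1 ∧ 0 < g ∨ g.sign = -1 ∧ g < 0 := sign_dichotomy hg.1
      rcases Int.natAbs_eq_iff.mp hc.symm with h2 | h2
      · have h1 : σ.inv (j : ℤ) = g := by rw [← h2, σ.left_inv g hg]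
        rw [h2]
        simp only [Fmap, move, h1, Int.natAbs_natCast, hsj]
        split_ifs <;> omega
      · have h2' : σ.f (-g) = (j : ℤ) := by rw [σ.neg, h2]; ring
        have h1 : σ.inv (j : ℤ) = -g := by rw [← h2', σ.left_inv (-g) (isDir_neg hg)]
        rw [h2]
        simp only [Fmap, move, h1, Int.natAbs_neg, Int.natAbs_natCast, Int.sign_neg, hsj]
        split_ifs <;> omega
    · have hne : (σ.inv (j : ℤ)).natAbs ≠ g.natAbs := by
        intro h
        rcases Int.natAbs_eq_natAbs_iff.mp h with h' | h'
        · apply hc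
          have hh : σ.f g = (j : ℤ) := by rw [← h', hfu]
          omega
        · apply hc
          have : σ.f g = -(j:ℤ) := by
            rw [show g = -σ.inv (j:ℤ) by omega, σ.neg, hfu]
          rw [this]
          omega
      simp only [Fmap, move]
      split_ifs <;> omega
  · have h1 : j ≠ (σ.f g).natAbs := by omega
    have h2 : j ≠ g.natAbs := by omega
    simp only [Fmap, move]
    split_ifs <;> omega

lemma Fmap_injective (σ : SignedPerm d) (v : Pt) : Function.Injective (Fmap d σ v) := by
  intro x y hxy
  funext m
  by_cases h : 1 ≤ m ∧ m ≤ d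
  · have hfm : IsDir d (σ.f (m : ℤ)) := σ.maps _ (isDir_coe h.1 h.2)
    have hfmn := isDir_pos hfm
    have hj := congrFun hxy (σ.f (m : ℤ)).natAbs
    have hli := σ.left_inv (m : ℤ) (isDir_coe h.1 h.2)
    rcases Int.natAbs_eq (σ.f (m : ℤ)) with h' | h'
    · have hinv : σ.inv (((σ.f (m : ℤ)).natAbs : ℕ) : ℤ) = (m : ℤ) := by
        rw [← h', hli]
      simp only [Fmap] at hj
      rw [hinv] at hj
      simp only [Int.natAbs_natCast] at hj
      split_ifs at hj <;> omega
    · have hinv : σ.inv (((σ.f (m : ℤ)).natAbs : ℕ) : ℤ) = -(m : ℤ) := by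
        rw [show (((σ.f (m : ℤ)).natAbs : ℕ) : ℤ) = -σ.f (m : ℤ) by omega, σ.neg_inv, hli]
      simp only [Fmap] at hj
      rw [hinv] at hj
      simp only [Int.natAbs_neg, Int.natAbs_natCast] at hj
      split_ifs at hj <;> omega
  · have hj := congrFun hxy m
    simp only [Fmap] at hj
    split_ifs at hj <;> omega

lemma grayPiece_eq (σ : SignedPerm d) (v : Pt) :
    grayPiece d σ v = (stdPath d).map (Fmap d σ v) := by
  unfold grayPiece stdPath
  have hstart : (fun j => 2 * v j + if 1 ≤ j ∧ j ≤ d then flipped (σ.inv (j : ℤ)) else 0) =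
      Fmap d σ v ptZero := by
    funext j
    simp only [Fmap, flipped, ptZero]
    split_ifs <;> omega
  rw [hstart]
  exact pathVertices_map_comm (fun g hg x => Fmap_move σ v (G_isDir d g hg) x) ptZero

lemma grayPiece_ne_nil (σ : SignedPerm d) (v : Pt) : grayPiece d σ v ≠ [] :=
  pathVertices_ne_nil _ _

lemma grayPiece_nodup (σ : SignedPerm d) (v : Pt) : (grayPiece d σ v).Nodup := by
  rw [grayPiece_eq]
  exact (stdPath_nodup d).map (Fmap_injective σ v)

lemma grayPiece_chain' (σ : SignedPerm d) (v : Pt) :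
    List.Chain' (IsEdge d) (grayPiece d σ v) := by
  apply pathVertices_chain'
  intro g' hg'
  obtain ⟨g, hg, rfl⟩ := List.mem_map.mp hg'
  exact σ.maps g (G_isDir d g hg)

lemma grayPiece_head? (σ : SignedPerm d) (v : Pt) :
    (grayPiece d σ v).head? = some (Fmap d σ v ptZero) := by
  rw [grayPiece_eq, List.head?_map, stdPath, pathVertices_head?]
  rfl

lemma grayPiece_getLast? (hd : 1 ≤ d) (σ : SignedPerm d) (v : Pt) :
    (grayPiece d σ v).getLast? = some (Fmap d σ v (unitPt d)) := by
  have h := endpt_map_comm (F := Fmap d σ v) (φ := σ.f) (l := G d)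
    (fun g hg x => Fmap_move σ v (G_isDir d g hg) x) ptZero
  rw [grayPiece_eq, List.getLast?_map, stdPath, pathVertices_getLast?, stdPath_endpt hd]
  rfl

/-- Corners of the cube `2·b + {0,1}^d`. -/
def Corner2 (d : ℕ) (b w : Pt) : Prop :=
  (∀ j, 1 ≤ j → j ≤ d → w j = 2 * b j ∨ w j = 2 * b j + 1) ∧
    ∀ j, j = 0 ∨ d < j → w j = 2 * b j

lemma grayPiece_mem (σ : SignedPerm d) (b : Pt) (w : Pt) :
    w ∈ grayPiece d σ b ↔ Corner2 d b w := by
  rw [grayPiece_eq, List.mem_map]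
  constructor
  · rintro ⟨x, hx, rfl⟩
    have hcx := (stdPath_mem d x).mp hx
    constructor
    · intro j h1 h2
      have hinv := isDir_pos (σ.maps_inv _ (isDir_coe h1 h2))
      have hx01 := hcx.1 _ hinv.1 hinv.2
      simp only [Fmap]
      split_ifs <;> omega
    · intro j hj
      have hxj := hcx.2 j hj
      simp only [Fmap]
      split_ifs <;> omega
  · intro hc
    refine ⟨fun m => if 1 ≤ m ∧ m ≤ d then
        (if 0 ≤ σ.f (m : ℤ) then w (σ.f (m : ℤ)).natAbs - 2 * b (σ.f (m : ℤ)).natAbs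
         else 2 * b (σ.f (m : ℤ)).natAbs + 1 - w (σ.f (m : ℤ)).natAbs) else 0, ?_, ?_⟩
    · apply (stdPath_mem d _).mpr
      constructor
      · intro m h1 h2
        have hfm := isDir_pos (σ.maps _ (isDir_coe h1 h2))
        have hw := hc.1 _ hfm.1 hfm.2
        beta_reduce
        rw [if_pos ⟨h1, h2⟩]
        split_ifs <;> omega
      · intro m hm
        beta_reduce
        rw [if_neg (show ¬(1 ≤ m ∧ m ≤ d) by omega)]
    · funext j
      by_cases hj : 1 ≤ j ∧ j ≤ d
      · have hjd : IsDir d (j : ℤ) := isDir_coe hj.1 hj.2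
        have hu := isDir_pos (σ.maps_inv _ hjd)
        have hfu : σ.f (σ.inv (j : ℤ)) = (j : ℤ) := σ.right_inv _ hjd
        have hw := hc.1 j hj.1 hj.2
        simp only [Fmap]
        rw [if_pos hj]
        beta_reduce
        rw [if_pos (show 1 ≤ (σ.inv (j:ℤ)).natAbs ∧ (σ.inv (j:ℤ)).natAbs ≤ d from ⟨hu.1, hu.2⟩)]
        rcases Int.natAbs_eq (σ.inv (j : ℤ)) with h' | h'
        · have hf : σ.f (((σ.inv (j : ℤ)).natAbs : ℕ) : ℤ) = (j : ℤ) := by rw [← h', hfu]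
          rw [hf]
          simp only [Int.natAbs_natCast]
          split_ifs <;> omega
        · have hf : σ.f (((σ.inv (j : ℤ)).natAbs : ℕ) : ℤ) = -(j : ℤ) := by
            rw [show (((σ.inv (j : ℤ)).natAbs : ℕ) : ℤ) = -σ.inv (j:ℤ) by omega, σ.neg, hfu]
          rw [hf]
          simp only [Int.natAbs_neg, Int.natAbs_natCast]
          split_ifs <;> omega
      · simp only [Fmap]
        rw [if_neg hj]
        beta_reduce
        rw [if_neg hj]
        have := hc.2 j (by omega)
        omega

end WFAux


namespace WFAux

variable {d : ℕ}

set_option maxHeartbeats 2000000 in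
lemma junction (hd : 1 ≤ d) (σ σ' : SignedPerm d) (u : Pt) {e : ℤ} (he : IsDir d e) :
    IsEdge d (Fmap d σ u (unitPt d)) (Fmap d σ' (move u e) ptZero) ↔
      ((∀ j : ℤ, 1 ≤ j → j ≤ (d : ℤ) →
          (Int.sign (σ'.inv j) = Int.sign (σ.inv j) ↔
            (j.natAbs = (σ.f (d : ℤ)).natAbs ↔ j.natAbs = e.natAbs))) ∧
        Int.sign (σ'.inv e) = 1) := by
  have hen := isDir_pos he
  have hes := sign_dichotomy he.1
  have hLj : ∀ j : ℕ, 1 ≤ j → j ≤ d →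
      Fmap d σ u (unitPt d) j = 2 * u j +
        (if (σ.inv (j : ℤ)).natAbs = d then (if 0 ≤ σ.inv (j : ℤ) then 1 else 0)
         else (if 0 ≤ σ.inv (j : ℤ) then 0 else 1)) := by
    intro j h1 h2
    simp only [Fmap, unitPt]
    split_ifs <;> omega
  have hHj : ∀ j : ℕ, 1 ≤ j → j ≤ d →
      Fmap d σ' (move u e) ptZero j = 2 * u j +
        (if j = e.natAbs then 2 * e.sign else 0) +
        (if 0 ≤ σ'.inv (j : ℤ) then 0 else 1) := by
    intro j h1 h2
    simp only [Fmap, move, ptZero]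
    split_ifs <;> omega
  have hOut : ∀ j : ℕ, ¬(1 ≤ j ∧ j ≤ d) →
      Fmap d σ u (unitPt d) j = 2 * u j ∧
      Fmap d σ' (move u e) ptZero j = 2 * u j := by
    intro j hj
    simp only [Fmap, move, ptZero, unitPt]
    constructor
    · split_ifs <;> omega
    · split_ifs <;> omega
  have hinv_e : σ'.inv e ≠ 0 := (σ'.maps_inv e he).1
  constructor
  · rintro ⟨e', hde', heq⟩
    have he'n := isDir_pos hde'
    have hes' := sign_dichotomy hde'.1
    have hco : ∀ j : ℕ, Fmap d σ' (move u e) ptZero j =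
        if j = e'.natAbs then Fmap d σ u (unitPt d) j + e'.sign
        else Fmap d σ u (unitPt d) j := by
      intro j
      rw [heq]
      rfl
    have hkey : e'.natAbs = e.natAbs := by
      by_contra hne
      have h1 := hco e.natAbs
      rw [if_neg (by omega)] at h1
      have h2 := hHj e.natAbs hen.1 hen.2
      rw [if_pos rfl] at h2
      have h3 := hLj e.natAbs hen.1 hen.2
      split_ifs at h2 h3 <;> omega
    have hii : Int.sign (σ'.inv e) = 1 := by
      have h1 := hco e.natAbs
      rw [if_pos (by omega)] at h1
      have h2 := hHj e.natAbs hen.1 hen.2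
      rw [if_pos rfl] at h2
      have h3 := hLj e.natAbs hen.1 hen.2
      rcases hes with ⟨hs, hpos⟩ | ⟨hs, hneg⟩
      · have hord : 0 ≤ σ'.inv ((e.natAbs : ℕ) : ℤ) := by
          split_ifs at h2 h3 <;> omega
        rw [show ((e.natAbs : ℕ) : ℤ) = e by omega] at hord
        rcases sign_dichotomy hinv_e with ⟨h, _⟩ | ⟨_, h⟩
        · exact h
        · omega
      · have hrw : σ'.inv ((e.natAbs : ℕ) : ℤ) = -σ'.inv e := by
          rw [show ((e.natAbs : ℕ) : ℤ) = -e by omega, σ'.neg_inv]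
        have hord : σ'.inv ((e.natAbs : ℕ) : ℤ) < 0 := by
          split_ifs at h2 h3 <;> omega
        rw [hrw] at hord
        rcases sign_dichotomy hinv_e with ⟨h, _⟩ | ⟨_, h⟩
        · exact h
        · omega
    refine ⟨?_, hii⟩
    intro j hj1 hj2
    have hj1' : 1 ≤ j.natAbs := by omega
    have hj2' : j.natAbs ≤ d := by omega
    have hcast : ((j.natAbs : ℕ) : ℤ) = j := by omega
    have hne1 : σ'.inv j ≠ 0 := (σ'.maps_inv j ⟨by omega, by omega⟩).1
    have hne2 : σ.inv j ≠ 0 := (σ.maps_inv j ⟨by omega, by omega⟩).1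
    have h5 : σ'.inv ((j.natAbs : ℕ) : ℤ) = σ'.inv j := by rw [hcast]
    have h6 : σ.inv ((j.natAbs : ℕ) : ℤ) = σ.inv j := by rw [hcast]
    have hbr : (σ.inv ((j.natAbs : ℕ) : ℤ)).natAbs = d ↔
        j.natAbs = (σ.f (d : ℤ)).natAbs := by
      rw [inv_abs_eq_iff σ hj1' hj2' hd le_rfl]
      exact eq_comm
    rw [sign_eq_iff hne1 hne2, ← h5, ← h6, ← hbr]
    have h1 := hco j.natAbs
    rw [hkey] at h1
    have h2 := hHj j.natAbs hj1' hj2'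
    have h3 := hLj j.natAbs hj1' hj2'
    split_ifs at h1 h2 h3 <;> omega
  · rintro ⟨hiff, hsig⟩
    have hpos' : 0 < σ'.inv e := by
      rcases sign_dichotomy hinv_e with ⟨_, h⟩ | ⟨h, _⟩
      · exact h
      · omega
    refine ⟨e, he, ?_⟩
    funext j
    show Fmap d σ' (move u e) ptZero j =
      if j = e.natAbs then Fmap d σ u (unitPt d) j + e.sign else Fmap d σ u (unitPt d) j
    by_cases hj : 1 ≤ j ∧ j ≤ d
    · have h2 := hHj j hj.1 hj.2
      have h3 := hLj j hj.1 hj.2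
      have hne1 : σ'.inv (j : ℤ) ≠ 0 := (σ'.maps_inv _ (isDir_coe hj.1 hj.2)).1
      have hne2 : σ.inv (j : ℤ) ≠ 0 := (σ.maps_inv _ (isDir_coe hj.1 hj.2)).1
      have hiffj := hiff (j : ℤ) (by omega) (by omega)
      rw [sign_eq_iff hne1 hne2] at hiffj
      rw [show ((j : ℤ)).natAbs = j by omega] at hiffj
      have hbr : (j = (σ.f (d : ℤ)).natAbs) ↔ (σ.inv ((j : ℕ) : ℤ)).natAbs = d := by
        rw [inv_abs_eq_iff σ hj.1 hj.2 hd le_rfl]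
        exact eq_comm
      rw [hbr] at hiffj
      have hsg : (0 < e → 0 ≤ σ'.inv ((e.natAbs : ℕ) : ℤ)) ∧
          (e < 0 → σ'.inv ((e.natAbs : ℕ) : ℤ) < 0) := by
        constructor
        · intro hp
          rw [show ((e.natAbs : ℕ) : ℤ) = e by omega]
          omega
        · intro hp
          have hh : σ'.inv ((e.natAbs : ℕ) : ℤ) = -σ'.inv e := by
            rw [show ((e.natAbs : ℕ) : ℤ) = -e by omega, σ'.neg_inv]
          omega
      by_cases hje : j = e.natAbs
      · subst hje
        split_ifs at h2 h3 ⊢ <;> omega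
      · rw [if_neg hje] at h2 ⊢
        split_ifs at h2 h3 <;> omega
    · have h4 := hOut j hj
      rw [if_neg (by omega)]
      omega

end WFAux


set_option maxHeartbeats 2000000 in
/-- continuity conditions for inflation of well-folded curves.
`A` is a well-folded `k`-curve with vertices `v 0, …, v (K−1)` and edge
directions `e 0, …, e (K−2)`; `B` is formed by replacing each vertex `v i` by the
1-curve `σ i (G(d))` in the cube `2·(v i) + {0,1}^d` and each edge by an edge of
the same direction.  Then `B` is a valid well-folded `(k+1)`-curve if and only if
for each `i` with `i+1 < K`: (i) for every `j ∈ {1,…,d}`,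
`sgn(σ_{i+1}⁻¹(j)) = sgn(σ_i⁻¹(j))` iff `j` equals neither or both of `|σ_i(d)|`
and `|e_i|`, and otherwise `sgn(σ_{i+1}⁻¹(j)) = −sgn(σ_i⁻¹(j))`; and
(ii) `sgn(σ_{i+1}⁻¹(e_i)) = 1`. -/
theorem wellfolded_inflation_conditions (d k K : ℕ) (hd : 1 ≤ d)
    (hK : K = 2 ^ (d * k))
    (v : ℕ → Pt) (A : List Pt) (hA : A = (List.range K).map v)
    (hwf : WellFolded d A) (hkc : IsKCurve d k A)
    (σ : ℕ → SignedPerm d) (e : ℕ → ℤ)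
    (he : ∀ i, i + 1 < K → HasDir d (v i) (v (i + 1)) (e i))
    (B : List Pt)
    (hB : B = ((List.range K).map (fun i => grayPiece d (σ i) (v i))).flatten) :
    (IsKCurve d (k + 1) B ∧ WellFolded d B) ↔
      (∀ i, i + 1 < K →
        (∀ j : ℤ, 1 ≤ j → j ≤ (d : ℤ) →
          ((Int.sign ((σ (i + 1)).inv j) = Int.sign ((σ i).inv j)) ↔
            ((j.natAbs = ((σ i).f (d : ℤ)).natAbs) ↔ (j.natAbs = (e i).natAbs))) ∧
          (¬ ((j.natAbs = ((σ i).f (d : ℤ)).natAbs) ↔ (j.natAbs = (e i).natAbs)) →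
            Int.sign ((σ (i + 1)).inv j) = - Int.sign ((σ i).inv j))) ∧
        Int.sign ((σ (i + 1)).inv (e i)) = 1) := by
  classical
  open WFAux in
  have hKpos : 0 < K := by rw [hK]; positivity
  subst hB
  subst hA
  obtain ⟨K', rfl⟩ : ∃ K', K = K' + 1 := ⟨K - 1, by omega⟩
  have hvC : ∀ i, i < K' + 1 → InCube d k (v i) := fun i hi =>
    (hkc.2 (v i)).mp (List.mem_map.mpr ⟨i, List.mem_range.mpr hi, rfl⟩)
  have hvinj : ∀ i ∈ List.range (K' + 1), ∀ i' ∈ List.range (K' + 1), v i = v i' → i = i' :=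
    List.inj_on_of_nodup_map hkc.1.1
  have hnn : [] ∉ (List.range (K' + 1)).map fun i => grayPiece d (σ i) (v i) := by
    intro hmem
    obtain ⟨i, _, hi⟩ := List.mem_map.mp hmem
    exact grayPiece_ne_nil _ _ hi
  have hstep : ∀ i, i + 1 < K' + 1 → v (i + 1) = move (v i) (e i) := fun i hi => (he i hi).2
  have hlast : ∀ i, (grayPiece d (σ i) (v i)).getLast? = some (Fmap d (σ i) (v i) (unitPt d)) :=
    fun i => grayPiece_getLast? hd _ _
  have hhead : ∀ i, (grayPiece d (σ i) (v i)).head? = some (Fmap d (σ i) (v i) ptZero) :=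
    fun i => grayPiece_head? _ _
  have hjunc : List.Chain'
      (fun l₁ l₂ => ∀ x ∈ l₁.getLast?, ∀ y ∈ l₂.head?, IsEdge d x y)
      ((List.range (K' + 1)).map fun i => grayPiece d (σ i) (v i)) ↔
      ∀ i, i + 1 < K' + 1 →
        IsEdge d (Fmap d (σ i) (v i) (unitPt d)) (Fmap d (σ (i + 1)) (v (i + 1)) ptZero) := by
    rw [List.Chain', List.isChain_map, show (K' + 1) = Nat.succ K' from rfl, List.isChain_range_succ]
    constructor
    · intro h i hi
      exact h i (by omega) _ (Option.mem_def.mpr (hlast i)) _ (Option.mem_def.mpr (hhead (i + 1)))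
    · intro h m hm x hx y hy
      rw [Option.mem_def, hlast m] at hx
      rw [Option.mem_def, hhead (m + 1)] at hy
      injection hx with hx
      injection hy with hy
      subst hx
      subst hy
      exact h m (by omega)
  have hBchain_iff : List.Chain' (IsEdge d)
      (((List.range (K' + 1)).map fun i => grayPiece d (σ i) (v i)).flatten) ↔
      ∀ i, i + 1 < K' + 1 →
        IsEdge d (Fmap d (σ i) (v i) (unitPt d)) (Fmap d (σ (i + 1)) (v (i + 1)) ptZero) := by
    rw [List.Chain', List.isChain_flatten hnn]
    constructor
    · rintro ⟨_, h2⟩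
      exact hjunc.mp h2
    · intro h
      refine ⟨?_, hjunc.mpr h⟩
      intro l hl
      obtain ⟨i, _, rfl⟩ := List.mem_map.mp hl
      exact grayPiece_chain' _ _
  have hmain : ∀ i, i + 1 < K' + 1 →
      (IsEdge d (Fmap d (σ i) (v i) (unitPt d)) (Fmap d (σ (i + 1)) (v (i + 1)) ptZero) ↔
        ((∀ j : ℤ, 1 ≤ j → j ≤ (d : ℤ) →
          ((Int.sign ((σ (i + 1)).inv j) = Int.sign ((σ i).inv j)) ↔
            ((j.natAbs = ((σ i).f (d : ℤ)).natAbs) ↔ (j.natAbs = (e i).natAbs))) ∧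
          (¬ ((j.natAbs = ((σ i).f (d : ℤ)).natAbs) ↔ (j.natAbs = (e i).natAbs)) →
            Int.sign ((σ (i + 1)).inv j) = - Int.sign ((σ i).inv j))) ∧
        Int.sign ((σ (i + 1)).inv (e i)) = 1)) := by
    intro i hi
    rw [hstep i hi, junction hd (σ i) (σ (i + 1)) (v i) (he i hi).1]
    constructor
    · rintro ⟨h1, h2⟩
      refine ⟨fun j hj1 hj2 => ⟨h1 j hj1 hj2, ?_⟩, h2⟩
      intro hnot
      have hne1 : (σ (i + 1)).inv j ≠ 0 := ((σ (i + 1)).maps_inv j ⟨by omega, by omega⟩).1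
      have hne2 : (σ i).inv j ≠ 0 := ((σ i).maps_inv j ⟨by omega, by omega⟩).1
      have hd1 := sign_dichotomy hne1
      have hd2 := sign_dichotomy hne2
      have hx : ¬(Int.sign ((σ (i + 1)).inv j) = Int.sign ((σ i).inv j)) :=
        fun hh => hnot ((h1 j hj1 hj2).mp hh)
      omega
    · rintro ⟨h1, h2⟩
      exact ⟨fun j hj1 hj2 => (h1 j hj1 hj2).1, h2⟩
  constructor
  · rintro ⟨hkB, _⟩
    intro i hi
    exact (hmain i hi).mp (hBchain_iff.mp hkB.1.2 i hi)
  · intro hcond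
    have hch : List.Chain' (IsEdge d)
        (((List.range (K' + 1)).map fun i => grayPiece d (σ i) (v i)).flatten) :=
      hBchain_iff.mpr fun i hi => (hmain i hi).mpr (hcond i hi)
    have hnod : (((List.range (K' + 1)).map fun i => grayPiece d (σ i) (v i)).flatten).Nodup := by
      rw [List.nodup_flatten]
      constructor
      · intro l hl
        obtain ⟨i, _, rfl⟩ := List.mem_map.mp hl
        exact grayPiece_nodup _ _
      · rw [List.pairwise_iff_getElem]
        intro a b ha hb hab
        rw [List.length_map, List.length_range] at ha hb
        simp only [List.getElem_map, List.getElem_range]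
        intro x hxa hxb
        have h1 := (grayPiece_mem _ _ _).mp hxa
        have h2 := (grayPiece_mem _ _ _).mp hxb
        have hv : v a = v b := by
          funext j
          by_cases hj : 1 ≤ j ∧ j ≤ d
          · have ha1 := h1.1 j hj.1 hj.2
            have hb1 := h2.1 j hj.1 hj.2
            omega
          · have ha1 := h1.2 j (by omega)
            have hb1 := h2.2 j (by omega)
            omega
        have := hvinj a (List.mem_range.mpr (by omega)) b (List.mem_range.mpr (by omega)) hv
        omega
    have hmem : ∀ w : Pt,
        w ∈ (((List.range (K' + 1)).map fun i => grayPiece d (σ i) (v i)).flatten) ↔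
          InCube d (k + 1) w := by
      intro w
      rw [List.mem_flatten]
      have hpow : (2 : ℤ) ^ (k + 1) = 2 * 2 ^ k := by ring
      have hpow0 : (0 : ℤ) < 2 ^ k := by positivity
      constructor
      · rintro ⟨l, hl, hwl⟩
        obtain ⟨i, hi, rfl⟩ := List.mem_map.mp hl
        have hi' := List.mem_range.mp hi
        have hcr := (grayPiece_mem _ _ _).mp hwl
        have hvc := hvC i hi'
        constructor
        · intro j h1 h2
          have ha := hcr.1 j h1 h2
          have hb := hvc.1 j h1 h2
          rw [hpow]
          omega
        · intro j hj
          have ha := hcr.2 j hj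
          have hb := hvc.2 j hj
          omega
      · intro hw
        have hbC : InCube d k (fun j => if 1 ≤ j ∧ j ≤ d then w j / 2 else 0) := by
          constructor
          · intro j h1 h2
            have hb := hw.1 j h1 h2
            rw [hpow] at hb
            beta_reduce
            rw [if_pos ⟨h1, h2⟩]
            omega
          · intro j hj
            beta_reduce
            rw [if_neg (show ¬(1 ≤ j ∧ j ≤ d) by omega)]
        have hmem2 := (hkc.2 _).mpr hbC
        obtain ⟨i, hi, hvi⟩ := List.mem_map.mp hmem2
        refine ⟨grayPiece d (σ i) (v i), List.mem_map.mpr ⟨i, hi, rfl⟩,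
          (grayPiece_mem _ _ _).mpr ?_⟩
        constructor
        · intro j h1 h2
          have h3 : v i j = if 1 ≤ j ∧ j ≤ d then w j / 2 else 0 := congrFun hvi j
          rw [if_pos ⟨h1, h2⟩] at h3
          have hb := hw.1 j h1 h2
          rw [hpow] at hb
          omega
        · intro j hj
          have h3 : v i j = if 1 ≤ j ∧ j ≤ d then w j / 2 else 0 := congrFun hvi j
          rw [if_neg (show ¬(1 ≤ j ∧ j ≤ d) by omega)] at h3
          have hb := hw.2 j hj
          omega
    refine ⟨⟨⟨hnod, hch⟩, hmem⟩, ?_⟩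
    refine WellFolded.inflate hwf ⟨σ, ?_, hnod, hch⟩
    rw [List.length_map, List.length_range]
    congr 1
    apply List.map_congr_left
    intro i hi
    have hi' := List.mem_range.mp hi
    congr 1
    rw [List.getD_eq_getElem _ _ (by simp only [List.length_map, List.length_range]; omega)]
    simp
end
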